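/- Let k be a positive integer with k ≡ 2 (mod 4) that is not a power of 2, and let c : Fin 3 → ℕ → ℕ be a counting array of a solution, i.e., c is finitely supported and ∑_{a<3, b} (c a b : ℚ)/(2^a * k^b) = 1. Let β be the largest b such that c a b ≠ 0 for some a, and suppose β ≥ 1, c 1 β ≤ 1, and c 2 β ≤ 1. Then c 2 β = 0; moreover, if c 1 β = 0 then c 0 β ≥ k/2, and if c 1 β = 1 then c 0 β ≥ (k-2)/4. -/

import Mathlib

/-- For `k ≡ 2 (mod 4)` not a power of 2: in the top nonzero row `β ≥ 1` of the
counting array of a solution, if `c 1 β ≤ 1` and `c 2 β ≤ 1`, then `c 2 β = 0`;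
moreover if `c 1 β = 0` then `c 0 β ≥ k/2`, and if `c 1 β = 1` then `c 0 β ≥ (k-2)/4`. -/
theorem top_row_min_mod_two (k : ℕ) (hk : 0 < k) (hkmod : k % 4 = 2)
    (hk2 : ¬ ∃ m : ℕ, k = 2 ^ m)
    (c : Fin 3 → ℕ → ℕ)
    (hfin : {p : Fin 3 × ℕ | c p.1 p.2 ≠ 0}.Finite)
    (hsum : ∑ᶠ (a : Fin 3) (b : ℕ), (c a b : ℚ) / (2 ^ (a : ℕ) * (k : ℚ) ^ b) = 1)
    (β : ℕ) (hβtop : ∃ a, c a β ≠ 0) (hβmax : ∀ b, (∃ a, c a b ≠ 0) → b ≤ β)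
    (hβ1 : 1 ≤ β) (hc1 : c 1 β ≤ 1) (hc2 : c 2 β ≤ 1) :
    c 2 β = 0 ∧
      (c 1 β = 0 → k / 2 ≤ c 0 β) ∧
      (c 1 β = 1 → (k - 2) / 4 ≤ c 0 β) := by
  have hkQ : (k : ℚ) ≠ 0 := by positivity
  have hzero : ∀ a b, β < b → c a b = 0 := by
    intro a b hb
    by_contra h
    exact absurd (hβmax b ⟨a, h⟩) (not_le.2 hb)
  -- rewrite inner finsum as finite sum
  have h1 : ∀ a : Fin 3, ∑ᶠ (b : ℕ), (c a b : ℚ) / (2 ^ (a : ℕ) * (k : ℚ) ^ b)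
      = ∑ b ∈ Finset.range (β + 1), (c a b : ℚ) / (2 ^ (a : ℕ) * (k : ℚ) ^ b) := by
    intro a
    apply finsum_eq_finset_sum_of_support_subset
    intro b hb
    simp only [Function.mem_support] at hb
    simp only [Finset.coe_range, Set.mem_Iio]
    by_contra hb'
    rw [hzero a b (by omega)] at hb
    simp at hb
  rw [finsum_eq_sum_of_fintype] at hsum
  simp only [h1] at hsum
  -- integer identity
  set T : ℕ := ∑ a : Fin 3, ∑ b ∈ Finset.range (β + 1),
      c a b * 2 ^ (2 - (a : ℕ)) * k ^ (β - b) with hTdef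
  have hT : (T : ℚ) = 4 * (k : ℚ) ^ β := by
    have : (T : ℚ) = ∑ a : Fin 3, ∑ b ∈ Finset.range (β + 1),
        (4 * (k : ℚ) ^ β) * ((c a b : ℚ) / (2 ^ (a : ℕ) * (k : ℚ) ^ b)) := by
      rw [hTdef]
      push_cast
      refine Finset.sum_congr rfl fun a _ => Finset.sum_congr rfl fun b hb => ?_
      have ha : (a : ℕ) ≤ 2 := by omega
      have hb' : b ≤ β := by simp [Finset.mem_range] at hb; omega
      have h2 : (2 : ℚ) ^ (2 - (a : ℕ)) * 2 ^ (a : ℕ) = 4 := by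
        rw [← pow_add, Nat.sub_add_cancel ha]; norm_num
      have h3 : (k : ℚ) ^ (β - b) * (k : ℚ) ^ b = (k : ℚ) ^ β := by
        rw [← pow_add, Nat.sub_add_cancel hb']
      have hne : (2 : ℚ) ^ (a : ℕ) * (k : ℚ) ^ b ≠ 0 := by positivity
      field_simp
      calc (c a b : ℚ) * 2 ^ (2 - (a:ℕ)) * (k:ℚ) ^ (β - b) * 2 ^ (a:ℕ) * (k:ℚ) ^ b
          = (c a b : ℚ) * ((k:ℚ) ^ (β - b) * (k:ℚ) ^ b) * (2 ^ (2 - (a:ℕ)) * 2 ^ (a:ℕ)) := by ring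
        _ = (c a b : ℚ) * (k:ℚ) ^ β * 4 := by rw [h2, h3]
        _ = (c a b : ℚ) * 4 * (k:ℚ) ^ β := by ring
    simp only [← Finset.mul_sum] at this
    rw [this, hsum, mul_one]
  have hTnat : T = 4 * k ^ β := by exact_mod_cast hT
  have hT2 : T = (∑ b ∈ Finset.range β, (4 * c 0 b + 2 * c 1 b + c 2 b) * k ^ (β - b))
      + (4 * c 0 β + 2 * c 1 β + c 2 β) := by
    rw [hTdef, Finset.sum_comm]
    rw [show (∑ b ∈ Finset.range (β + 1), ∑ a : Fin 3, c a b * 2 ^ (2 - (a:ℕ)) * k ^ (β - b))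
        = ∑ b ∈ Finset.range (β + 1), (4 * c 0 b + 2 * c 1 b + c 2 b) * k ^ (β - b) from
      Finset.sum_congr rfl fun b _ => by rw [Fin.sum_univ_three]; norm_num; ring]
    rw [Finset.sum_range_succ, Nat.sub_self, pow_zero, mul_one]
  set A : ℕ := ∑ b ∈ Finset.range β, (4 * c 0 b + 2 * c 1 b + c 2 b) * k ^ (β - b) with hA
  have key : 4 * k ^ β = A + (4 * c 0 β + 2 * c 1 β + c 2 β) := by rw [← hTnat, hT2]
  have h2k : 2 ∣ k := by omega
  have h2A : 2 ∣ A :=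
    Finset.dvd_sum fun b hb => Dvd.dvd.mul_left
      (dvd_pow h2k (by simp only [Finset.mem_range] at hb; omega)) _
  have hkA : k ∣ A :=
    Finset.dvd_sum fun b hb => Dvd.dvd.mul_left
      (dvd_pow dvd_rfl (by simp only [Finset.mem_range] at hb; omega)) _
  have h2T : 2 ∣ 4 * k ^ β := ⟨2 * k ^ β, by ring⟩
  have hkT : k ∣ 4 * k ^ β := Dvd.dvd.mul_left (dvd_pow dvd_rfl (by omega)) 4
  have hc2z : c 2 β = 0 := by
    obtain ⟨u, hu⟩ := h2A; obtain ⟨v, hv⟩ := h2T; omega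
  have hkD : k ∣ 4 * c 0 β + 2 * c 1 β := by
    have : k ∣ A + (4 * c 0 β + 2 * c 1 β + c 2 β) := key ▸ hkT
    rw [hc2z, Nat.add_zero] at this
    exact (Nat.dvd_add_right hkA).mp this
  have hpos : 0 < 4 * c 0 β + 2 * c 1 β := by
    obtain ⟨a, ha⟩ := hβtop
    fin_cases a <;> simp at ha <;> omega
  have hge : k ≤ 4 * c 0 β + 2 * c 1 β := Nat.le_of_dvd hpos hkD
  refine ⟨hc2z, fun h10 => ?_, fun h11 => ?_⟩
  · rw [h10, Nat.mul_zero, Nat.add_zero] at hkD hpos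
    obtain ⟨q, hq⟩ : ∃ q, k = 4 * q + 2 := ⟨k / 4, by omega⟩
    have hodd : (2 * q + 1) ∣ 2 * c 0 β := by
      obtain ⟨t, ht⟩ := hkD
      refine ⟨t, ?_⟩
      have h' : 4 * c 0 β = 2 * ((2 * q + 1) * t) := by rw [ht, hq]; ring
      omega
    have hcop : Nat.Coprime (2 * q + 1) 2 := by
      rw [Nat.coprime_two_right]
      exact ⟨q, by omega⟩
    have hdvd : (2 * q + 1) ∣ c 0 β := (Nat.Coprime.dvd_of_dvd_mul_left hcop hodd)
    have := Nat.le_of_dvd (by omega) hdvd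
    omega
  · omega
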